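/- If after propagating release times by r_j := max{r_{j−1} + p_{j−1}, r_j} for j = 2,…,n and deadlines by d̃_j := min{d̃_{j+1} − p_{j+1}, d̃_j} for j = n−1,…,1 there exists a task j whose propagated execution window satisfies d̃_j − r_j < p_j, then no feasible schedule exists for the given order of tasks. -/
import Mathlib


/-- A feasible schedule for `n` tasks (indexed `0, …, n-1`) with release times `r`,
deadlines `d` and processing times `p`. -/
def Feasible (n : ℕ) (r d p s : ℕ → ℝ) : Prop :=
  (∀ j, j < n → r j ≤ s j ∧ s j + p j ≤ d j) ∧
  (∀ j, j + 1 < n → s j + p j ≤ s (j + 1))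

/-- Propagated release times: `r'_0 = r_0`, `r'_{j+1} = max (r'_j + p_j) r_{j+1}`. -/
noncomputable def propR (r p : ℕ → ℝ) : ℕ → ℝ
  | 0 => r 0
  | j + 1 => max (propR r p j + p j) (r (j + 1))

/-- Propagated deadlines, indexed from the back: `propDrev n d p k` is the propagated
deadline of task `n-1-k`, i.e. `d'_{n-1} = d_{n-1}` and
`d'_{j} = min (d'_{j+1} - p_{j+1}) (d_j)`. -/
noncomputable def propDrev (n : ℕ) (d p : ℕ → ℝ) : ℕ → ℝ
  | 0 => d (n - 1)
  | k + 1 => min (propDrev n d p k - p (n - 1 - k)) (d (n - 1 - (k + 1)))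

/-- If after propagation of release times and deadlines some task has
an execution window shorter than its processing time, then no feasible schedule exists
for the given order of tasks. -/
theorem stmt_2 (n : ℕ) (r d p : ℕ → ℝ)
    (hr : ∀ j, j < n → 0 ≤ r j) (hp : ∀ j, j < n → 0 < p j)
    (hrdp : ∀ j, j < n → r j + p j ≤ d j)
    (hviol : ∃ j, j < n ∧ propDrev n d p (n - 1 - j) - propR r p j < p j) :
    ¬ ∃ s : ℕ → ℝ, Feasible n r d p s := by
  rintro ⟨s, hfeas, hchain⟩
  obtain ⟨j, hj, hvi⟩ := hviol
  have hR : ∀ m, m < n → propR r p m ≤ s m := by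
    intro m
    induction m with
    | zero => intro hm; exact (hfeas 0 hm).1
    | succ k ih =>
      intro hm
      have hk : k < n := Nat.lt_of_succ_lt hm
      simp only [propR, max_le_iff]
      constructor
      · calc propR r p k + p k ≤ s k + p k := by linarith [ih hk]
          _ ≤ s (k + 1) := hchain k hm
      · exact (hfeas (k + 1) hm).1
  have hD : ∀ k, k < n → s (n - 1 - k) + p (n - 1 - k) ≤ propDrev n d p k := by
    intro k
    induction k with
    | zero =>
      intro hk
      have : n - 1 < n := by omega
      simpa [propDrev] using (hfeas (n - 1) this).2
    | succ k ih =>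
      intro hk
      have hkn : k < n := Nat.lt_of_succ_lt hk
      have hidx : n - 1 - (k + 1) + 1 = n - 1 - k := by omega
      have h1 : s (n - 1 - (k + 1)) + p (n - 1 - (k + 1)) ≤ s (n - 1 - k) := by
        have := hchain (n - 1 - (k + 1)) (by omega)
        rwa [hidx] at this
      have h2 := ih hkn
      have h3 : n - 1 - (k + 1) < n := by omega
      simp only [propDrev, le_min_iff]
      exact ⟨by linarith, (hfeas _ h3).2⟩
  have hD' := hD (n - 1 - j) (by omega)
  have : n - 1 - (n - 1 - j) = j := by omega
  rw [this] at hD'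
  have hR' := hR j hj
  linarith
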